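/- Consider the random-actions update X[n+1] = (1−α)X[n] + α T A[n] with α ∈ (0,1), T a K×K stochastic matrix, and A[n] conditionally independent Bernoulli actions with A_k[n] ~ Bernoulli(X_k[n]) given X[n]. Fix agents i, j with t_{ij} > 0. If X_j[n] → 0 in probability and E[X_i[n]²(1−X_i[n])²] → 0, then X_i[n] → 0 in probability. -/

import Mathlib

open MeasureTheory Matrix Filter

/-- Random-actions update `X[n+1] = (1-α)X[n] + α T A[n]` with conditionally
independent Bernoulli actions: if agent `i` trusts agent `j` (`t_{ij} > 0`),
`X_j[n] → 0` in probability and `E[X_i[n]²(1-X_i[n])²] → 0`, then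
`X_i[n] → 0` in probability. -/
theorem propagation_of_convergence_in_probability
    {Ω : Type*} {m0 : MeasurableSpace Ω} (μ : Measure Ω) [IsProbabilityMeasure μ]
    {K : ℕ} (T : Matrix (Fin K) (Fin K) ℝ)
    (hTnonneg : ∀ i j, 0 ≤ T i j)
    (hTstoch : ∀ i, ∑ j, T i j = 1)
    (α : ℝ) (hα : α ∈ Set.Ioo (0 : ℝ) 1)
    (X A : ℕ → Ω → Fin K → ℝ)
    (hXmeas : ∀ n, Measurable (X n)) (hAmeas : ∀ n, Measurable (A n))
    (hX01 : ∀ n ω k, X n ω k ∈ Set.Icc (0 : ℝ) 1)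
    (hA01 : ∀ n ω k, A n ω k = 0 ∨ A n ω k = 1)
    (m : ℕ → MeasurableSpace Ω)
    (hm : ∀ n, m n = MeasurableSpace.comap (X n) inferInstance)
    (hle : ∀ n, m n ≤ m0)
    (hmean : ∀ n k, μ[(fun ω => A n ω k)|m n] =ᵐ[μ] fun ω => X n ω k)
    (hpair : ∀ n k l, k ≠ l →
      μ[(fun ω => A n ω k * A n ω l)|m n] =ᵐ[μ] fun ω => X n ω k * X n ω l)
    (hupd : ∀ n ω, X (n + 1) ω = (1 - α) • X n ω + α • (T *ᵥ A n ω))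
    (i j : Fin K) (hTij : 0 < T i j)
    (hXj : ∀ ε : ℝ, 0 < ε →
      Tendsto (fun n => μ {ω | ε < X n ω j}) atTop (nhds 0))
    (hXi : Tendsto (fun n => ∫ ω, (X n ω i) ^ 2 * (1 - X n ω i) ^ 2 ∂μ)
      atTop (nhds 0)) :
    ∀ ε : ℝ, 0 < ε →
      Tendsto (fun n => μ {ω | ε < X n ω i}) atTop (nhds 0) := by
  obtain ⟨hα0, hα1⟩ := hα
  intro ε hε
  have hXim : ∀ n k, Measurable fun ω => X n ω k :=
    fun n k => (measurable_pi_apply k).comp (hXmeas n)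
  have hAim : ∀ n k, Measurable fun ω => A n ω k :=
    fun n k => (measurable_pi_apply k).comp (hAmeas n)
  have hTij1 : T i j ≤ 1 := by
    calc T i j ≤ ∑ k, T i k :=
          Finset.single_le_sum (fun k _ => hTnonneg i k) (Finset.mem_univ j)
      _ = 1 := hTstoch i
  set δ : ℝ := min ε (α * T i j / 2) with hδdef
  have hδpos : 0 < δ := lt_min hε (by positivity)
  have hδε : δ ≤ ε := min_le_left _ _
  have hδT : 2 * δ ≤ α * T i j := by
    have := min_le_right ε (α * T i j / 2); linarith
  have hδ1 : δ < 1 - δ := by nlinarith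
  -- integrability helper
  have hint : ∀ f : Ω → ℝ, Measurable f → (∀ ω, |f ω| ≤ 1) → Integrable f μ := by
    intro f hf hb
    exact Integrable.mono' (integrable_const 1) hf.aestronglyMeasurable
      (Filter.Eventually.of_forall fun ω => by simpa using hb ω)
  have hXint : ∀ n k, Integrable (fun ω => X n ω k) μ := fun n k =>
    hint _ (hXim n k) fun ω => abs_le.2
      ⟨by linarith [(hX01 n ω k).1], (hX01 n ω k).2⟩
  have hAint : ∀ n k, Integrable (fun ω => A n ω k) μ := fun n k =>
    hint _ (hAim n k) fun ω => by rcases hA01 n ω k with h | h <;> simp [h]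
  have hgmeas : ∀ n, Measurable fun ω => (X n ω i) ^ 2 * (1 - X n ω i) ^ 2 :=
    fun n => ((hXim n i).pow_const 2).mul
      ((measurable_const.sub (hXim n i)).pow_const 2)
  have hgint : ∀ n, Integrable (fun ω => (X n ω i) ^ 2 * (1 - X n ω i) ^ 2) μ := by
    intro n
    refine hint _ (hgmeas n) fun ω => ?_
    have h1 := (hX01 n ω i).1
    have h2 := (hX01 n ω i).2
    have ha : (X n ω i) ^ 2 ≤ 1 := by nlinarith
    have hb : (1 - X n ω i) ^ 2 ≤ 1 := by nlinarith
    have hp : (0 : ℝ) ≤ (X n ω i) ^ 2 * (1 - X n ω i) ^ 2 := by positivity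
    have hq : (X n ω i) ^ 2 * (1 - X n ω i) ^ 2 ≤ 1 :=
      mul_le_one₀ ha (by positivity) hb
    rw [abs_le]
    exact ⟨by linarith, hq⟩
  -- b n = E[X_j[n]]
  set b : ℕ → ℝ := fun n => ∫ ω, X n ω j ∂μ with hbdef
  have hbA : ∀ n, ∫ ω, A n ω j ∂μ = b n := by
    intro n
    calc ∫ ω, A n ω j ∂μ = ∫ ω, (μ[fun ω => A n ω j|m n]) ω ∂μ :=
          (integral_condExp (hle n)).symm
      _ = ∫ ω, X n ω j ∂μ := integral_congr_ae (hmean n j)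
  have hAone : ∀ n, (μ {ω | A n ω j = 1}).toReal = ∫ ω, A n ω j ∂μ := by
    intro n
    have hms : MeasurableSet {ω | A n ω j = 1} :=
      (hAim n j) (measurableSet_singleton 1)
    have heq : (fun ω => A n ω j)
        = Set.indicator {ω | A n ω j = 1} fun _ => (1 : ℝ) := by
      funext ω
      rcases hA01 n ω j with h | h
      · simp [Set.indicator, h, Set.mem_setOf_eq]
      · simp [Set.indicator, h, Set.mem_setOf_eq]
    rw [heq, integral_indicator_const _ hms, smul_eq_mul, mul_one]
    rfl
  have hbto : Tendsto b atTop (nhds 0) := by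
    rw [Metric.tendsto_atTop]
    intro η hη
    have h2 : Tendsto (fun n => μ {ω | η / 2 < X n ω j}) atTop (nhds 0) :=
      hXj (η / 2) (by linarith)
    have hev : ∀ᶠ n in atTop,
        μ {ω | η / 2 < X n ω j} < ENNReal.ofReal (η / 2) :=
      h2.eventually_lt_const (ENNReal.ofReal_pos.2 (by linarith))
    obtain ⟨N, hN⟩ := eventually_atTop.1 hev
    refine ⟨N, fun n hn => ?_⟩
    have hμr : (μ {ω | η / 2 < X n ω j}).toReal < η / 2 :=
      ENNReal.toReal_lt_of_lt_ofReal (hN n hn)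
    have hms : MeasurableSet {ω | η / 2 < X n ω j} :=
      measurableSet_lt measurable_const (hXim n j)
    have hbb : b n ≤ η / 2 + (μ {ω | η / 2 < X n ω j}).toReal := by
      have hpt : ∀ ω, X n ω j
          ≤ η / 2 + Set.indicator {ω | η / 2 < X n ω j} (fun _ => (1 : ℝ)) ω := by
        intro ω
        by_cases h : η / 2 < X n ω j
        · simp only [Set.indicator, Set.mem_setOf_eq, h, if_true]
          linarith [(hX01 n ω j).2]
        · simp only [Set.indicator, Set.mem_setOf_eq, h, if_false]
          linarith [not_lt.1 h]
      calc b n ≤ ∫ ω, (η / 2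
            + Set.indicator {ω | η / 2 < X n ω j} (fun _ => (1 : ℝ)) ω) ∂μ :=
            integral_mono (hXint n j)
              ((integrable_const _).add ((integrable_const 1).indicator hms))
              hpt
        _ = η / 2 + (μ {ω | η / 2 < X n ω j}).toReal := by
            rw [integral_add (integrable_const _) ((integrable_const 1).indicator hms),
              integral_const, integral_indicator_const _ hms]
            simp [measure_univ]
            rfl
    have hb0 : 0 ≤ b n := integral_nonneg fun ω => (hX01 n ω j).1
    rw [Real.dist_eq, sub_zero, abs_of_nonneg hb0]
    linarith
  -- c n
  set c : ℕ → ℝ :=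
    fun n => (∫ ω, (X n ω i) ^ 2 * (1 - X n ω i) ^ 2 ∂μ) / δ ^ 4 with hcdef
  have hcto : Tendsto c atTop (nhds 0) := by
    simpa using hXi.div_const (δ ^ 4)
  have hband : ∀ n,
      (μ {ω | δ < X n ω i ∧ X n ω i < 1 - δ}).toReal ≤ c n := by
    intro n
    set S := {ω | δ < X n ω i ∧ X n ω i < 1 - δ} with hSdef
    have hms : MeasurableSet S := by
      have : S = {ω | δ < X n ω i} ∩ {ω | X n ω i < 1 - δ} := rfl
      rw [this]
      exact (measurableSet_lt measurable_const (hXim n i)).inter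
        (measurableSet_lt (hXim n i) measurable_const)
    have hpt : ∀ ω, Set.indicator S (fun _ => δ ^ 4) ω
        ≤ (X n ω i) ^ 2 * (1 - X n ω i) ^ 2 := by
      intro ω
      by_cases h : ω ∈ S
      · have h1 : δ < X n ω i := h.1
        have h2 : X n ω i < 1 - δ := h.2
        rw [Set.indicator_of_mem h]
        have ha : δ ^ 2 ≤ (X n ω i) ^ 2 := by nlinarith
        have hb : δ ^ 2 ≤ (1 - X n ω i) ^ 2 := by nlinarith
        have hc : δ ^ 2 * δ ^ 2 ≤ (X n ω i) ^ 2 * (1 - X n ω i) ^ 2 :=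
          mul_le_mul ha hb (by positivity) (by positivity)
        nlinarith
      · rw [Set.indicator_of_notMem h]
        positivity
    have hkey : δ ^ 4 * (μ S).toReal ≤ ∫ ω, (X n ω i) ^ 2 * (1 - X n ω i) ^ 2 ∂μ := by
      calc δ ^ 4 * (μ S).toReal
          = ∫ ω, Set.indicator S (fun _ => δ ^ 4) ω ∂μ := by
            rw [integral_indicator_const _ hms, smul_eq_mul, mul_comm]
            rfl
        _ ≤ _ := integral_mono ((integrable_const _).indicator hms) (hgint n) hpt
    rw [hcdef]
    rw [le_div_iff₀ (by positivity : (0 : ℝ) < δ ^ 4)]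
    linarith
  -- pointwise key bound
  have hkey : ∀ n ω, A n ω j = 0 → X (n + 1) ω i ≤ 1 - α * T i j := by
    intro n ω hAj
    have hX1 : X (n + 1) ω i = (1 - α) * X n ω i + α * ∑ k, T i k * A n ω k := by
      rw [hupd n ω]
      simp [Matrix.mulVec, dotProduct]
    have hsum : ∑ k, T i k * A n ω k ≤ 1 - T i j := by
      have h1 : ∀ k ∈ Finset.univ, T i k * A n ω k ≤ if k = j then 0 else T i k := by
        intro k _
        by_cases hk : k = j
        · subst hk; simp [hAj]
        · simp only [hk, if_false]
          have hA1 : A n ω k ≤ 1 := by rcases hA01 n ω k with h | h <;> simp [h]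
          have hA0 : 0 ≤ A n ω k := by rcases hA01 n ω k with h | h <;> simp [h]
          nlinarith [hTnonneg i k]
      calc ∑ k, T i k * A n ω k ≤ ∑ k, if k = j then 0 else T i k :=
            Finset.sum_le_sum h1
        _ = ∑ k, (T i k - if k = j then T i j else 0) :=
            Finset.sum_congr rfl fun k _ => by by_cases hk : k = j <;> simp [hk]
        _ = (∑ k, T i k) - ∑ k, if k = j then T i j else 0 :=
            Finset.sum_sub_distrib _ _
        _ = 1 - T i j := by
            rw [hTstoch i, Finset.sum_ite_eq' Finset.univ j fun _ => T i j]
            simp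
    rw [hX1]
    have hXle := (hX01 n ω i).2
    have hXge := (hX01 n ω i).1
    nlinarith [hTnonneg i j]
  set f : ℕ → ℝ := fun n => (μ {ω | ε < X n ω i}).toReal with hfdef
  have hbound : ∀ n, f (n + 1) ≤ b n + c (n + 1) := by
    intro n
    have hsub : {ω | ε < X (n + 1) ω i} ⊆ {ω | A n ω j = 1}
        ∪ {ω | δ < X (n + 1) ω i ∧ X (n + 1) ω i < 1 - δ} := by
      intro ω hω
      rcases hA01 n ω j with h0 | h1
      · right
        refine ⟨lt_of_le_of_lt hδε hω, ?_⟩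
        have := hkey n ω h0
        linarith
      · left; exact h1
    have hμle : f (n + 1) ≤ (μ {ω | A n ω j = 1}).toReal
        + (μ {ω | δ < X (n + 1) ω i ∧ X (n + 1) ω i < 1 - δ}).toReal := by
      calc f (n + 1) ≤ (μ ({ω | A n ω j = 1}
            ∪ {ω | δ < X (n + 1) ω i ∧ X (n + 1) ω i < 1 - δ})).toReal :=
            ENNReal.toReal_mono (measure_ne_top μ _) (measure_mono hsub)
        _ ≤ _ := by
            rw [← ENNReal.toReal_add (measure_ne_top μ _) (measure_ne_top μ _)]
            exact ENNReal.toReal_mono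
              (ENNReal.add_ne_top.2 ⟨measure_ne_top μ _, measure_ne_top μ _⟩)
              (measure_union_le _ _)
    have h1 := hAone n
    have h2 := hbA n
    have h3 := hband (n + 1)
    linarith
  have hft : Tendsto (fun n => f (n + 1)) atTop (nhds 0) := by
    have hsum : Tendsto (fun n => b n + c (n + 1)) atTop (nhds 0) := by
      simpa using hbto.add (hcto.comp (tendsto_add_atTop_nat 1))
    exact squeeze_zero (fun n => ENNReal.toReal_nonneg) hbound hsum
  have hf : Tendsto f atTop (nhds 0) := (tendsto_add_atTop_iff_nat 1).1 hft
  have := ENNReal.tendsto_ofReal hf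
  rw [ENNReal.ofReal_zero] at this
  exact Tendsto.congr (fun n => ENNReal.ofReal_toReal (measure_ne_top μ _)) this
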